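/- The update function 𝐮 : ⋆ᵢ₌₁ⁿ Γᵢ → Γ₁ × ⋯ × Γₙ is a graph homomorphism from the free product to the cartesian (box) product of the factors: whenever ṽ and w̃ are adjacent in the free product, 𝐮(ṽ) and 𝐮(w̃) differ in exactly one coordinate j, and in that coordinate u_j(ṽ) and u_j(w̃) are adjacent in Γ_j. -/

import Mathlib

variable {ι : Type} [DecidableEq ι]

abbrev Letter (V : ι → Type) := Σ i, V i

def upd {V : ι → Type} (u : ∀ i, V i) : List (Letter V) → ∀ i, V i
  | [] => u
  | ⟨j, x⟩ :: w => Function.update (upd u w) j x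

def Adm {V : ι → Type} (u : ∀ i, V i) (w : List (Letter V)) : Prop :=
  w.Chain' (fun a b => a.1 ≠ b.1) ∧
    ∀ (a : Letter V) (p : List (Letter V)), a :: p <:+ w → a.2 ≠ upd u p a.1

def Word {V : ι → Type} (u : ∀ i, V i) := {w : List (Letter V) // Adm u w}

def emptyWord {V : ι → Type} (u : ∀ i, V i) : Word u :=
  ⟨[], List.IsChain.nil, by intro a p h; simp at h⟩

def Pre {V : ι → Type} (G : ∀ i, SimpleGraph (V i)) (u : ∀ i, V i)
    (v w : List (Letter V)) : Prop :=
  (∃ (p : List (Letter V)) (j : ι) (a b : V j),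
      (G j).Adj a b ∧ v = ⟨j, a⟩ :: p ∧ w = ⟨j, b⟩ :: p) ∨
  (∃ (j : ι) (a : V j), (G j).Adj (upd u v j) a ∧ w = ⟨j, a⟩ :: v)

def freeProd {V : ι → Type} (G : ∀ i, SimpleGraph (V i)) (u : ∀ i, V i) :
    SimpleGraph (Word u) :=
  SimpleGraph.fromRel fun v w => Pre G u v.1 w.1



lemma pre_upd {ι : Type} [DecidableEq ι] {V : ι → Type} (G : ∀ i, SimpleGraph (V i))
    (u : ∀ i, V i) {v w : List (Letter V)} (h : Pre G u v w) :
    ∃ j : ι, (G j).Adj (upd u v j) (upd u w j) ∧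
      ∀ i : ι, i ≠ j → upd u v i = upd u w i := by
  rcases h with ⟨p, j, a, b, hab, rfl, rfl⟩ | ⟨j, a, hadj, rfl⟩
  · refine ⟨j, ?_, ?_⟩
    · simp [upd, hab]
    · intro i hij; simp [upd, Function.update_of_ne hij]
  · refine ⟨j, ?_, ?_⟩
    · simpa [upd] using hadj
    · intro i hij; simp [upd, Function.update_of_ne hij]

/-- The update function is a graph homomorphism from the free product to
the cartesian (box) product: adjacent vertices of the free product have
updates differing in exactly one coordinate, adjacent in that coordinate. -/
theorem stmt8 {n : ℕ} {V : Fin n → Type} (G : ∀ i, SimpleGraph (V i))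
    (u : ∀ i, V i) (hconn : ∀ i, (G i).Connected)
    (v w : Word u) (h : (freeProd G u).Adj v w) :
    ∃ j : Fin n, (G j).Adj (upd u v.1 j) (upd u w.1 j) ∧
      ∀ i : Fin n, i ≠ j → upd u v.1 i = upd u w.1 i := by
  rcases h with ⟨hne, hpre | hpre⟩
  · exact pre_upd G u hpre
  · obtain ⟨j, hadj, heq⟩ := pre_upd G u hpre
    exact ⟨j, hadj.symm, fun i hi => (heq i hi).symm⟩
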